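/- Let R : ℝ^d → ℝ be concave, differentiable, β-smooth in the sense that R(y) ≥ R(x) + ⟨∇R(x), y-x⟩ - β‖y-x‖² for all x,y, and let K ⊆ ℝ^d be convex with diameter at most 1 in the Euclidean norm. Suppose x₀ ∈ K with R(x*) - R(x₀) ≤ B where x* ∈ argmax_{K} R, and the iterates satisfy x_{t+1} = (1-η)x_t + η v_t where v_t ∈ K satisfies ⟨v_t, ∇R(x_t)⟩ ≥ max_{v∈K} ⟨v, ∇R(x_t)⟩ - ε₁. Then R(x*) - R(x_T) ≤ B e^{-Tη} + ε₁ + ηβ. -/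

import Mathlib

open Real RealInnerProductSpace

lemma concave_grad_ineq {d : ℕ} (R : EuclideanSpace ℝ (Fin d) → ℝ)
    (hconc : ConcaveOn ℝ Set.univ R) (hdiff : Differentiable ℝ R)
    (x y : EuclideanSpace ℝ (Fin d)) :
    R y - R x ≤ ⟪gradient R x, y - x⟫ := by
  set g : ℝ → ℝ := fun t => R (x + t • (y - x)) with hg
  have hline : HasDerivAt (fun t : ℝ => x + t • (y - x)) (y - x) 0 := by
    simpa using ((hasDerivAt_id (0:ℝ)).smul_const (y - x)).const_add x
  have hgrad := (hdiff x).hasGradientAt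
  have hgd : HasDerivAt g ⟪gradient R x, y - x⟫ 0 := by
    have hx0 : x + (0:ℝ) • (y - x) = x := by simp
    have := (hx0 ▸ hgrad.hasFDerivAt :
        HasFDerivAt R _ (x + (0:ℝ) • (y - x))).comp_hasDerivAt 0 hline
    simpa [g, Function.comp_def] using this
  have htend : Filter.Tendsto (slope g 0) (nhdsWithin 0 (Set.Ioi 0))
      (nhds ⟪gradient R x, y - x⟫) :=
    (hasDerivAt_iff_tendsto_slope.mp hgd).mono_left
      (nhdsWithin_mono _ (fun t ht => ne_of_gt ht))
  refine ge_of_tendsto htend ?_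
  filter_upwards [Ioc_mem_nhdsGT_of_mem (by norm_num : (0:ℝ) ∈ Set.Ico 0 1)] with t ht
  have ht0 : 0 < t := ht.1
  have hcon := hconc.2 (Set.mem_univ x) (Set.mem_univ y)
    (by linarith [ht.2] : (0:ℝ) ≤ 1 - t) ht0.le (by ring)
  have hpt : x + t • (y - x) = (1 - t) • x + t • y := by module
  have hgt : g t = R ((1 - t) • x + t • y) := by rw [hg]; simp only; rw [hpt]
  have hg0 : g 0 = R x := by simp [hg]
  rw [slope_def_field, hgt, hg0, sub_zero, le_div_iff₀ ht0]
  simp only [smul_eq_mul] at hcon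
  nlinarith


/-- Frank–Wolfe with an `ε₁`-approximate linear maximization oracle over a
convex set of diameter at most `1`, for a `β`-smooth concave objective:
`R(x*) - R(x_T) ≤ B e^{-Tη} + ε₁ + ηβ`. -/
theorem frank_wolfe_convergence (d : ℕ)
    (R : EuclideanSpace ℝ (Fin d) → ℝ)
    (K : Set (EuclideanSpace ℝ (Fin d)))
    (hK : Convex ℝ K)
    (hdiam : ∀ x ∈ K, ∀ y ∈ K, ‖x - y‖ ≤ 1)
    (hconc : ConcaveOn ℝ Set.univ R) (hdiff : Differentiable ℝ R)
    (β B ε₁ η : ℝ) (hβ : 0 < β) (hB : 0 < B) (hε₁ : 0 ≤ ε₁)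
    (hη0 : 0 < η) (hη1 : η ≤ 1)
    (hsmooth : ∀ x y : EuclideanSpace ℝ (Fin d),
      R y ≥ R x + ⟪gradient R x, y - x⟫ - β * ‖y - x‖ ^ 2)
    (x v : ℕ → EuclideanSpace ℝ (Fin d))
    (xstar : EuclideanSpace ℝ (Fin d)) (hxstarK : xstar ∈ K)
    (hxstar : ∀ y ∈ K, R y ≤ R xstar)
    (hx0 : x 0 ∈ K) (hB0 : R xstar - R (x 0) ≤ B)
    (hvK : ∀ t, v t ∈ K)
    (hvopt : ∀ t, ∀ w ∈ K,
      ⟪v t, gradient R (x t)⟫ ≥ ⟪w, gradient R (x t)⟫ - ε₁)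
    (hstep : ∀ t, x (t + 1) = (1 - η) • x t + η • v t) :
    ∀ T : ℕ, R xstar - R (x T) ≤ B * Real.exp (-(T * η)) + ε₁ + η * β := by
  have hxK : ∀ t, x t ∈ K := by
    intro t
    induction t with
    | zero => exact hx0
    | succ n ih =>
      rw [hstep n]
      exact hK ih (hvK n) (by linarith) hη0.le (by ring)
  have key : ∀ t, R xstar - R (x (t+1)) ≤
      (1 - η) * (R xstar - R (x t)) + η * ε₁ + η ^ 2 * β := by
    intro t
    set g := gradient R (x t) with hgdef
    have hs := hsmooth (x t) (x (t+1))
    have hdx : x (t+1) - x t = η • (v t - x t) := by rw [hstep t]; module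
    rw [hdx] at hs
    have hnorm : ‖η • (v t - x t)‖ ^ 2 ≤ η ^ 2 := by
      rw [norm_smul, Real.norm_eq_abs, mul_pow, sq_abs]
      have h1 : ‖v t - x t‖ ≤ 1 := hdiam (v t) (hvK t) (x t) (hxK t)
      have h2 : ‖v t - x t‖ ^ 2 ≤ 1 := by nlinarith [norm_nonneg (v t - x t)]
      nlinarith [sq_nonneg η, mul_le_mul_of_nonneg_left h2 (sq_nonneg η)]
    have hip : ⟪g, η • (v t - x t)⟫ = η * (⟪v t, g⟫ - ⟪x t, g⟫) := by
      rw [real_inner_smul_right, inner_sub_right, real_inner_comm g (v t),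
        real_inner_comm g (x t)]
    have horacle : ⟪v t, g⟫ ≥ ⟪xstar, g⟫ - ε₁ := hvopt t xstar hxstarK
    have hgi : R xstar - R (x t) ≤ ⟪g, xstar - x t⟫ :=
      concave_grad_ineq R hconc hdiff (x t) xstar
    have ha : ⟪g, xstar - x t⟫ = ⟪xstar, g⟫ - ⟪x t, g⟫ := by
      rw [inner_sub_right, real_inner_comm g xstar, real_inner_comm g (x t)]
    rw [ha] at hgi
    have hmul : η * (R xstar - R (x t)) ≤ η * (⟪xstar, g⟫ - ⟪x t, g⟫) :=
      mul_le_mul_of_nonneg_left hgi hη0.le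
    have hmul2 : η * (⟪xstar, g⟫ - ε₁ - ⟪x t, g⟫) ≤ η * (⟪v t, g⟫ - ⟪x t, g⟫) :=
      mul_le_mul_of_nonneg_left (by linarith) hη0.le
    have hβn : β * ‖η • (v t - x t)‖ ^ 2 ≤ β * η ^ 2 :=
      mul_le_mul_of_nonneg_left hnorm hβ.le
    rw [hip] at hs
    nlinarith
  have hrec : ∀ T : ℕ, R xstar - R (x T) ≤ (1 - η) ^ T * B + ε₁ + η * β := by
    intro T
    induction T with
    | zero =>
      simp only [pow_zero, one_mul]
      nlinarith [mul_nonneg hη0.le hβ.le]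
    | succ n ih =>
      have h1η : (0:ℝ) ≤ 1 - η := by linarith
      calc R xstar - R (x (n+1))
          ≤ (1 - η) * (R xstar - R (x n)) + η * ε₁ + η ^ 2 * β := key n
        _ ≤ (1 - η) * ((1 - η) ^ n * B + ε₁ + η * β) + η * ε₁ + η ^ 2 * β := by
            have := mul_le_mul_of_nonneg_left ih h1η
            linarith
        _ = (1 - η) ^ (n+1) * B + ε₁ + η * β := by ring
  intro T
  have hexp : (1 - η) ^ T ≤ Real.exp (-(T * η)) := by
    have h1 : (1 - η) ≤ Real.exp (-η) := by
      linarith [Real.add_one_le_exp (-η)]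
    calc (1 - η) ^ T ≤ (Real.exp (-η)) ^ T :=
          pow_le_pow_left₀ (by linarith) h1 T
      _ = Real.exp (-(T * η)) := by
          rw [← Real.exp_nat_mul]; ring_nf
  have := hrec T
  nlinarith [mul_le_mul_of_nonneg_right hexp hB.le]
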